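/- Let f be the piecewise-constant density on [−T,T)^d ⊂ ℝ^d taking values in {T/Z, (T+1)/Z} on each unit cube of the integer grid (and 0 outside), where Z is the normalizing constant Θ((2T)^{d+1}). Then for any coordinate direction e_i and any κ ∈ (0,1), ∫_{ℝ^d} |f(x + κe_i) − f(x)| dx ≤ C·κ/T for a universal constant C (depending only on d through lower-order factors absorbed into C). -/

import Mathlib

open MeasureTheory Set

lemma vol_pi_set (d : ℕ) (I : Fin d → Set ℝ) (hI : ∀ j, MeasurableSet (I j)) :
    volume {x : EuclideanSpace ℝ (Fin d) | ∀ j, x j ∈ I j} = ∏ j, volume (I j) := by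
  have hmp := PiLp.volume_preserving_ofLp (Fin d)
  have hset : {x : EuclideanSpace ℝ (Fin d) | ∀ j, x j ∈ I j}
      = (@WithLp.ofLp 2 (Fin d → ℝ)) ⁻¹' (Set.univ.pi I) := by
    ext x; simp [Set.mem_pi]
  rw [hset, hmp.measure_preimage ((MeasurableSet.univ_pi hI).nullMeasurableSet), volume_pi_pi]

lemma meas_pi_set (d : ℕ) (I : Fin d → Set ℝ) (hI : ∀ j, MeasurableSet (I j)) :
    MeasurableSet {x : EuclideanSpace ℝ (Fin d) | ∀ j, x j ∈ I j} := by
  have heval : ∀ j : Fin d, Measurable fun x : EuclideanSpace ℝ (Fin d) => x j := fun j =>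
    (measurable_pi_apply j).comp (PiLp.volume_preserving_ofLp (Fin d)).measurable
  have : {x : EuclideanSpace ℝ (Fin d) | ∀ j, x j ∈ I j}
      = ⋂ j, (fun x : EuclideanSpace ℝ (Fin d) => x j) ⁻¹' I j := by
    ext x; simp
  rw [this]
  exact MeasurableSet.iInter fun j => (heval j) (hI j)

lemma vol_slab (d : ℕ) (i : Fin d) (B : Set ℝ) (hB : MeasurableSet B) (b r : ℝ)
    (hb0 : 0 ≤ b) (hb : volume B ≤ ENNReal.ofReal b) (hr : 0 ≤ r) :
    volume {x : EuclideanSpace ℝ (Fin d) |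
        ∀ j, x j ∈ (fun j => if j = i then B else Ico (-r) r) j}
      ≤ ENNReal.ofReal (b * (2*r)^(d-1)) := by
  classical
  set I : Fin d → Set ℝ := fun j => if j = i then B else Ico (-r) r with hI
  have hmeas : ∀ j, MeasurableSet (I j) := by
    intro j; by_cases hj : j = i <;> simp [hI, hj, hB, measurableSet_Ico]
  rw [vol_pi_set d I hmeas]
  have hprod : ∏ j, volume (I j) = volume B * (ENNReal.ofReal (2*r))^(d-1) := by
    rw [← Finset.mul_prod_erase Finset.univ _ (Finset.mem_univ i)]
    have h1 : volume (I i) = volume B := by simp [hI]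
    have h2 : ∏ j ∈ Finset.univ.erase i, volume (I j) = (ENNReal.ofReal (2*r))^(d-1) := by
      rw [Finset.prod_congr rfl (fun j hj => ?_), Finset.prod_const]
      · congr 1
        · simp [Finset.card_erase_of_mem]
      · have hj' : j ≠ i := Finset.ne_of_mem_erase hj
        simp [hI, hj', Real.volume_Ico]
        ring_nf
        rw [ENNReal.ofReal_mul' (by norm_num)]
        simp
    rw [h1, h2]
  rw [hprod, ENNReal.ofReal_mul hb0, ENNReal.ofReal_pow (by linarith)]
  gcongr

theorem grid_density_coordinate_shift
    (d : ℕ) (hd : 0 < d) :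
    ∃ C > (0:ℝ), ∀ (T : ℕ), 1 ≤ T →
      ∀ (z : (Fin d → ℤ) → ℤ), (∀ a, z a = 0 ∨ z a = 1) →
      ∀ (Z : ℝ), (T : ℝ) * (2 * T) ^ d ≤ Z → Z ≤ ((T : ℝ) + 1) * (2 * T) ^ d →
      ∀ (f : EuclideanSpace ℝ (Fin d) → ℝ),
        (∀ x, (∀ j, -(T:ℤ) ≤ ⌊x j⌋ ∧ ⌊x j⌋ ≤ (T:ℤ) - 1) →
          f x = ((T : ℝ) + (z fun j => ⌊x j⌋)) / Z) →
        (∀ x, ¬(∀ j, -(T:ℤ) ≤ ⌊x j⌋ ∧ ⌊x j⌋ ≤ (T:ℤ) - 1) → f x = 0) →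
      ∀ (i : Fin d) (κ : ℝ), 0 < κ → κ < 1 →
        ∫ x, |f (x + κ • EuclideanSpace.single i (1:ℝ)) - f x| ≤ C * κ / T := by
  classical
  refine ⟨6, by norm_num, ?_⟩
  intro T hT z hz Z hZ1 hZ2 f hf hf0 i κ hκ0 hκ1
  have hT1 : (1:ℝ) ≤ (T:ℝ) := by exact_mod_cast hT
  have hTpos : (0:ℝ) < T := by linarith
  have hZpos : (0:ℝ) < Z := lt_of_lt_of_le (by positivity) hZ1
  -- the bad sets
  set B₁ : Set ℝ := ⋃ n ∈ Finset.Icc (-(T:ℤ)+1) ((T:ℤ)-1), Ico ((n:ℝ)-κ) (n:ℝ) with hB₁def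
  set B₂ : Set ℝ := Ico ((T:ℝ)-κ) T ∪ Ico (-(T:ℝ)-κ) (-(T:ℝ)) with hB₂def
  have hB₁meas : MeasurableSet B₁ :=
    (Finset.Icc (-(T:ℤ)+1) ((T:ℤ)-1)).measurableSet_biUnion fun n _ => measurableSet_Ico
  have hB₂meas : MeasurableSet B₂ := measurableSet_Ico.union measurableSet_Ico
  set I₁ : Fin d → Set ℝ := fun j => if j = i then B₁ else Ico (-(T:ℝ)) T with hI₁def
  set I₂ : Fin d → Set ℝ := fun j => if j = i then B₂ else Ico (-(T:ℝ)) T with hI₂def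
  set S₁ : Set (EuclideanSpace ℝ (Fin d)) := {x | ∀ j, x j ∈ I₁ j} with hS₁def
  set S₂ : Set (EuclideanSpace ℝ (Fin d)) := {x | ∀ j, x j ∈ I₂ j} with hS₂def
  have hI₁meas : ∀ j, MeasurableSet (I₁ j) := by
    intro j; by_cases hj : j = i <;> simp [hI₁def, hj, hB₁meas, measurableSet_Ico]
  have hI₂meas : ∀ j, MeasurableSet (I₂ j) := by
    intro j; by_cases hj : j = i <;> simp [hI₂def, hj, hB₂meas, measurableSet_Ico]
  have hS₁meas : MeasurableSet S₁ := meas_pi_set d I₁ hI₁meas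
  have hS₂meas : MeasurableSet S₂ := meas_pi_set d I₂ hI₂meas
  -- volume bounds
  have hB₁vol : volume B₁ ≤ ENNReal.ofReal (2*(T:ℝ)*κ) := by
    calc volume B₁ ≤ ∑ n ∈ Finset.Icc (-(T:ℤ)+1) ((T:ℤ)-1), volume (Ico ((n:ℝ)-κ) (n:ℝ)) :=
          measure_biUnion_finset_le _ _
      _ = (Finset.Icc (-(T:ℤ)+1) ((T:ℤ)-1)).card • ENNReal.ofReal κ := by
          rw [Finset.sum_congr rfl fun n _ => ?_, Finset.sum_const]
          rw [Real.volume_Ico]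
          congr 1
          ring
      _ ≤ (2*T : ℕ) • ENNReal.ofReal κ := by
          have hcard : (Finset.Icc (-(T:ℤ)+1) ((T:ℤ)-1)).card ≤ 2*T := by
            rw [Int.card_Icc]
            omega
          rw [nsmul_eq_mul, nsmul_eq_mul]
          gcongr
      _ = ENNReal.ofReal (2*(T:ℝ)*κ) := by
          rw [nsmul_eq_mul, ← ENNReal.ofReal_natCast, ← ENNReal.ofReal_mul (by positivity)]
          congr 1
          push_cast
          ring
  have hB₂vol : volume B₂ ≤ ENNReal.ofReal (2*κ) := by
    refine le_trans (measure_union_le _ _) ?_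
    rw [Real.volume_Ico, Real.volume_Ico]
    have e1 : (T:ℝ) - ((T:ℝ) - κ) = κ := by ring
    have e2 : -(T:ℝ) - (-(T:ℝ) - κ) = κ := by ring
    rw [e1, e2, ← ENNReal.ofReal_add hκ0.le hκ0.le]
    exact ENNReal.ofReal_le_ofReal (by linarith)
  have hS₁vol : volume S₁ ≤ ENNReal.ofReal ((2*(T:ℝ)*κ) * (2*(T:ℝ))^(d-1)) :=
    vol_slab d i B₁ hB₁meas _ _ (by positivity) hB₁vol (by linarith)
  have hS₂vol : volume S₂ ≤ ENNReal.ofReal ((2*κ) * (2*(T:ℝ))^(d-1)) :=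
    vol_slab d i B₂ hB₂meas _ _ (by positivity) hB₂vol (by linarith)
  -- pointwise bound
  have hfb : ∀ w, 0 ≤ f w ∧ f w ≤ ((T:ℝ)+1)/Z := by
    intro w
    by_cases hw : ∀ j, -(T:ℤ) ≤ ⌊w j⌋ ∧ ⌊w j⌋ ≤ (T:ℤ)-1
    · rw [hf w hw]
      have h01 : (0:ℝ) ≤ ((z fun j => ⌊w j⌋ : ℤ):ℝ) ∧ ((z fun j => ⌊w j⌋ : ℤ):ℝ) ≤ 1 := by
        rcases hz (fun j => ⌊w j⌋) with h | h <;> rw [h] <;> norm_num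
      exact ⟨div_nonneg (by linarith [h01.1]) hZpos.le,
        div_le_div_of_nonneg_right (by linarith [h01.2]) hZpos.le⟩
    · rw [hf0 w hw]
      exact ⟨le_refl 0, by positivity⟩
  have key : ∀ x : EuclideanSpace ℝ (Fin d),
      |f (x + κ • EuclideanSpace.single i (1:ℝ)) - f x| ≤
        S₁.indicator (fun _ => 1/Z) x + S₂.indicator (fun _ => ((T:ℝ)+1)/Z) x := by
    intro x
    set y := x + κ • EuclideanSpace.single i (1:ℝ) with hydef
    have hyj : ∀ j, j ≠ i → y j = x j := by
      intro j hj
      simp [hydef, PiLp.add_apply, PiLp.smul_apply, EuclideanSpace.single_apply, hj]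
    have hyi : y i = x i + κ := by
      simp [hydef, PiLp.add_apply, PiLp.smul_apply, EuclideanSpace.single_apply]
    have hind₁ : 0 ≤ S₁.indicator (fun _ => 1/Z) x :=
      Set.indicator_nonneg (fun _ _ => by positivity) x
    have hind₂ : 0 ≤ S₂.indicator (fun _ => ((T:ℝ)+1)/Z) x :=
      Set.indicator_nonneg (fun _ _ => by positivity) x
    by_cases hjbad : ∃ j, j ≠ i ∧ ¬(-(T:ℤ) ≤ ⌊x j⌋ ∧ ⌊x j⌋ ≤ (T:ℤ)-1)
    · obtain ⟨j, hj, hbad⟩ := hjbad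
      have h1 : f x = 0 := hf0 x (fun h => hbad (h j))
      have h2 : f y = 0 := hf0 y (fun h => hbad (by rw [← hyj j hj]; exact h j))
      rw [h1, h2, sub_self, abs_zero]
      exact add_nonneg hind₁ hind₂
    · push_neg at hjbad
      have hreal : ∀ j, j ≠ i → -(T:ℝ) ≤ x j ∧ x j < (T:ℝ) := by
        intro j hj
        obtain ⟨h1, h2⟩ := hjbad j hj
        constructor
        · have h1' := Int.le_floor.mp h1
          exact_mod_cast h1'
        · have h2' := Int.floor_lt.mp (show ⌊x j⌋ < (T:ℤ) by omega)
          exact_mod_cast h2'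
      set n := ⌊x i⌋ with hn
      set m := ⌊x i + κ⌋ with hm
      have hflj : ∀ j, j ≠ i → ⌊y j⌋ = ⌊x j⌋ := fun j hj => by rw [hyj j hj]
      have hfli : ⌊y i⌋ = m := by rw [hyi]
      have hxlt : x i < (n:ℝ) + 1 := by
        rw [hn]
        exact_mod_cast Int.lt_floor_add_one (x i)
      have hxge : (n:ℝ) ≤ x i := by
        rw [hn]
        exact Int.floor_le (x i)
      have hnm : n ≤ m := by
        rw [hn, hm]
        exact Int.floor_le_floor (by linarith)
      have hm1 : m ≤ n + 1 := by
        have : m < n + 2 := by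
          rw [hm]
          apply Int.floor_lt.mpr
          push_cast
          linarith
        omega
      by_cases hmn : m = n
      · have hfl : ∀ j, ⌊y j⌋ = ⌊x j⌋ := by
          intro j
          by_cases hj : j = i
          · subst hj; rw [hfli, hmn, hn]
          · exact hflj j hj
        by_cases hin : ∀ j, -(T:ℤ) ≤ ⌊x j⌋ ∧ ⌊x j⌋ ≤ (T:ℤ)-1
        · have hiny : ∀ j, -(T:ℤ) ≤ ⌊y j⌋ ∧ ⌊y j⌋ ≤ (T:ℤ)-1 := fun j => (hfl j) ▸ hin j
          rw [hf y hiny, hf x hin]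
          have heq : (fun j => ⌊y j⌋) = fun j => ⌊x j⌋ := funext hfl
          rw [heq, sub_self, abs_zero]
          exact add_nonneg hind₁ hind₂
        · have hiny : ¬ ∀ j, -(T:ℤ) ≤ ⌊y j⌋ ∧ ⌊y j⌋ ≤ (T:ℤ)-1 :=
            fun h => hin (fun j => (hfl j) ▸ h j)
          rw [hf0 y hiny, hf0 x hin, sub_self, abs_zero]
          exact add_nonneg hind₁ hind₂
      · have hm2 : m = n + 1 := by omega
        have hxige : ((n:ℝ) + 1) ≤ x i + κ := by
          have : ((n+1 : ℤ):ℝ) ≤ x i + κ := Int.le_floor.mp (by rw [← hm, hm2])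
          push_cast at this
          linarith
        by_cases hmid : -(T:ℤ) ≤ n ∧ n + 1 ≤ (T:ℤ) - 1
        · -- interior crossing
          have hinx : ∀ j, -(T:ℤ) ≤ ⌊x j⌋ ∧ ⌊x j⌋ ≤ (T:ℤ)-1 := by
            intro j
            by_cases hj : j = i
            · subst hj; rw [← hn]; exact ⟨hmid.1, by omega⟩
            · exact hjbad j hj
          have hiny : ∀ j, -(T:ℤ) ≤ ⌊y j⌋ ∧ ⌊y j⌋ ≤ (T:ℤ)-1 := by
            intro j
            by_cases hj : j = i
            · subst hj; rw [hfli, hm2]; exact ⟨by omega, hmid.2⟩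
            · rw [hflj j hj]; exact hjbad j hj
          have hxS₁ : x ∈ S₁ := by
            simp only [hS₁def, Set.mem_setOf_eq]
            intro j
            by_cases hj : j = i
            · subst hj
              simp only [hI₁def, if_pos rfl]
              refine Set.mem_iUnion₂.mpr ⟨n+1, Finset.mem_Icc.mpr ⟨by omega, by omega⟩, ?_, ?_⟩
              · push_cast
                linarith
              · push_cast
                linarith
            · simp only [hI₁def, if_neg hj]
              exact ⟨(hreal j hj).1, (hreal j hj).2⟩
          rw [Set.indicator_of_mem hxS₁]
          have hdle : |f y - f x| ≤ 1/Z := by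
            rw [hf y hiny, hf x hinx, div_sub_div_same, abs_div, abs_of_pos hZpos]
            refine div_le_div_of_nonneg_right ?_ hZpos.le
            have e : ((T:ℝ) + (z fun j => ⌊y j⌋)) - ((T:ℝ) + (z fun j => ⌊x j⌋))
                = (((z fun j => ⌊y j⌋ : ℤ):ℝ) - ((z fun j => ⌊x j⌋ : ℤ):ℝ)) := by ring
            rw [e]
            rcases hz (fun j => ⌊y j⌋) with h1 | h1 <;> rcases hz (fun j => ⌊x j⌋) with h2 | h2 <;>
              rw [h1, h2] <;> norm_num
          linarith
        · -- boundary crossing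
          by_cases hin : (∀ j, -(T:ℤ) ≤ ⌊x j⌋ ∧ ⌊x j⌋ ≤ (T:ℤ)-1) ∨
              (∀ j, -(T:ℤ) ≤ ⌊y j⌋ ∧ ⌊y j⌋ ≤ (T:ℤ)-1)
          · have hni : n = (T:ℤ) - 1 ∨ n = -(T:ℤ) - 1 := by
              rcases hin with h | h
              · have h' := h i
                rw [← hn] at h'
                omega
              · have h' := h i
                rw [hfli, hm2] at h'
                omega
            have hxS₂ : x ∈ S₂ := by
              simp only [hS₂def, Set.mem_setOf_eq]
              intro j
              by_cases hj : j = i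
              · subst hj
                simp only [hI₂def, if_pos rfl, hB₂def]
                rcases hni with h | h
                · left
                  rw [h] at hxlt hxige
                  push_cast at hxlt hxige
                  exact ⟨by linarith, by linarith⟩
                · right
                  rw [h] at hxlt hxige
                  push_cast at hxlt hxige
                  exact ⟨by linarith, by linarith⟩
              · simp only [hI₂def, if_neg hj]
                exact ⟨(hreal j hj).1, (hreal j hj).2⟩
            rw [Set.indicator_of_mem hxS₂]
            have habs : |f y - f x| ≤ ((T:ℝ)+1)/Z :=
              abs_sub_le_iff.mpr ⟨by linarith [(hfb y).2, (hfb x).1],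
                by linarith [(hfb x).2, (hfb y).1]⟩
            linarith
          · rcases not_or.mp hin with ⟨h1, h2⟩
            rw [hf0 x h1, hf0 y h2, sub_self, abs_zero]
            exact add_nonneg hind₁ hind₂
  -- integrate
  have hint₁ : Integrable (S₁.indicator fun _ => (1:ℝ)/Z) :=
    (integrable_indicator_iff hS₁meas).mpr
      (integrableOn_const (lt_of_le_of_lt hS₁vol ENNReal.ofReal_lt_top).ne)
  have hint₂ : Integrable (S₂.indicator fun _ => ((T:ℝ)+1)/Z) :=
    (integrable_indicator_iff hS₂meas).mpr
      (integrableOn_const (lt_of_le_of_lt hS₂vol ENNReal.ofReal_lt_top).ne)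
  have step1 : ∫ x, |f (x + κ • EuclideanSpace.single i (1:ℝ)) - f x| ≤
      ∫ x, (S₁.indicator (fun _ => 1/Z) x + S₂.indicator (fun _ => ((T:ℝ)+1)/Z) x) := by
    refine integral_mono_of_nonneg (Filter.Eventually.of_forall fun x => abs_nonneg _)
      (hint₁.add hint₂) (Filter.Eventually.of_forall key)
  have step2 : ∫ x, (S₁.indicator (fun _ => 1/Z) x + S₂.indicator (fun _ => ((T:ℝ)+1)/Z) x)
      = (volume S₁).toReal * (1/Z) + (volume S₂).toReal * (((T:ℝ)+1)/Z) := by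
    rw [integral_add hint₁ hint₂, integral_indicator_const _ hS₁meas,
      integral_indicator_const _ hS₂meas, smul_eq_mul, smul_eq_mul]
    rfl
  -- final arithmetic
  set P := (2*(T:ℝ))^(d-1) with hPdef
  have hPpos : 0 < P := pow_pos (by linarith) _
  have ht1 : (volume S₁).toReal ≤ 2*(T:ℝ)*κ*P :=
    ENNReal.toReal_le_of_le_ofReal (by positivity) hS₁vol
  have ht2 : (volume S₂).toReal ≤ 2*κ*P :=
    ENNReal.toReal_le_of_le_ofReal (by positivity) hS₂vol
  have hpow : (2*(T:ℝ))^d = (2*(T:ℝ))*P := by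
    rw [hPdef, ← pow_succ']
    congr 1
    omega
  have hZ1' : (T:ℝ)*((2*(T:ℝ))*P) ≤ Z := by rw [← hpow]; exact hZ1
  calc ∫ x, |f (x + κ • EuclideanSpace.single i (1:ℝ)) - f x|
      ≤ ∫ x, (S₁.indicator (fun _ => 1/Z) x + S₂.indicator (fun _ => ((T:ℝ)+1)/Z) x) := step1
    _ = (volume S₁).toReal * (1/Z) + (volume S₂).toReal * (((T:ℝ)+1)/Z) := step2
    _ ≤ (2*(T:ℝ)*κ*P) * (1/Z) + (2*κ*P) * (((T:ℝ)+1)/Z) :=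
        add_le_add (mul_le_mul_of_nonneg_right ht1 (by positivity))
          (mul_le_mul_of_nonneg_right ht2 (by positivity))
    _ = (2*(T:ℝ)*κ*P + 2*κ*P*((T:ℝ)+1))/Z := by ring
    _ ≤ 6*κ/(T:ℝ) := by
        rw [div_le_div_iff₀ hZpos hTpos]
        nlinarith [mul_le_mul_of_nonneg_left hZ1' (show (0:ℝ) ≤ 6*κ by positivity),
          mul_nonneg (mul_nonneg (mul_nonneg hκ0.le hTpos.le) hPpos.le)
            (show (0:ℝ) ≤ 4*(T:ℝ)-1 by linarith)]
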